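/- Fix α > 1 and suppose a prior probability measure w* on Θ attains C_α = sup_w I_α^w(θ,Y|X^n) over prior probability measures w on Θ. Let p̂*_α be the conditional α-NML predictor associated with w*, i.e. p̂*_α(y|x^n) = ( ∫_Θ p_θ(y)^α w*(dθ|x^n) )^{1/α} / Σ_{y'} ( ∫_Θ p_θ(y')^α w*(dθ|x^n) )^{1/α} with posterior w*(dθ|x^n) = w*(dθ) p_θ(x^n)/∫_Θ p_{θ'}(x^n) w*(dθ'). Then for every θ ∈ Θ, the batch α-regret satisfies R_α(p̂*_α,θ) ≤ C_α. -/

import Mathlib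

open MeasureTheory Real Filter

/-- `q` is a probability mass function on the finite type `B`. -/
def IsPMF {B : Type*} [Fintype B] (q : B → ℝ) : Prop :=
  (∀ y, 0 ≤ q y) ∧ ∑ y, q y = 1

/-- Probability of a tuple of `n` i.i.d. batches: `p_θ(x^n) = ∏ i, p_θ(x_i)`. -/
def prodP {Θ B : Type*} (p : Θ → B → ℝ) (n : ℕ) (θ : Θ) (x : Fin n → B) : ℝ :=
  ∏ i, p θ (x i)

/-- The batch `α`-regret
`R_α(p̂,θ) = (1/(α-1)) log ( Σ_{x^n} p_θ(x^n) Σ_y p_θ(y) (p_θ(y)/p̂(y|x^n))^(α-1) )`. -/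
noncomputable def alphaRegret {Θ B : Type*} [Fintype B] (α : ℝ) (p : Θ → B → ℝ) (n : ℕ)
    (phat : (Fin n → B) → B → ℝ) (θ : Θ) : ℝ :=
  (α - 1)⁻¹ * Real.log (∑ x : Fin n → B, prodP p n θ x *
    ∑ y : B, p θ y * (p θ y / phat x y) ^ (α - 1))

/-- The conditional Rényi divergence `D_α(Y ‖ Ŷ | θ, X^n)` under the joint law
`w(dθ) p_θ(x^n) p_θ(y)`. -/
noncomputable def condRenyiDiv {Θ B : Type*} [MeasurableSpace Θ] [Fintype B] (α : ℝ)
    (p : Θ → B → ℝ) (n : ℕ) (w : Measure Θ) (phat : (Fin n → B) → B → ℝ) : ℝ :=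
  (α - 1)⁻¹ * Real.log (∫ θ, (∑ x : Fin n → B, prodP p n θ x *
    ∑ y : B, p θ y * (p θ y / phat x y) ^ (α - 1)) ∂w)

/-- The conditional Sibson mutual information
`I_α^w(θ,Y|X^n) = (1/(α-1)) log Σ_{x^n} { Σ_y ( ∫ p_θ(x^n) p_θ(y)^α w(dθ) )^(1/α) }^α`. -/
noncomputable def sibsonMI {Θ B : Type*} [MeasurableSpace Θ] [Fintype B] (α : ℝ)
    (p : Θ → B → ℝ) (n : ℕ) (w : Measure Θ) : ℝ :=
  (α - 1)⁻¹ * Real.log (∑ x : Fin n → B,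
    (∑ y : B, (∫ θ, prodP p n θ x * p θ y ^ α ∂w) ^ α⁻¹) ^ α)

/-- Integral of `g` against the posterior `w(dθ|x^n) = w(dθ) p_θ(x^n) / ∫ p_θ'(x^n) w(dθ')`. -/
noncomputable def posteriorInt {Θ B : Type*} [MeasurableSpace Θ] (p : Θ → B → ℝ) (n : ℕ)
    (w : Measure Θ) (x : Fin n → B) (g : Θ → ℝ) : ℝ :=
  (∫ θ, prodP p n θ x * g θ ∂w) / (∫ θ, prodP p n θ x ∂w)

/-- The conditional `α`-NML predictor
`p̂_α(y|x^n) = ( ∫ p_θ(y)^α w(dθ|x^n) )^(1/α) / Σ_y' ( ∫ p_θ(y')^α w(dθ|x^n) )^(1/α)`. -/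
noncomputable def alphaNML {Θ B : Type*} [MeasurableSpace Θ] [Fintype B] (α : ℝ)
    (p : Θ → B → ℝ) (n : ℕ) (w : Measure Θ) (x : Fin n → B) (y : B) : ℝ :=
  (posteriorInt p n w x fun θ => p θ y ^ α) ^ α⁻¹ /
    ∑ y' : B, (posteriorInt p n w x fun θ => p θ y' ^ α) ^ α⁻¹


private lemma deriv_nonpos_of_max {h : ℝ → ℝ} {h' : ℝ} (hd : HasDerivAt h h' 0)
    (hle : ∀ t ∈ Set.Ioo (0:ℝ) 1, h t ≤ h 0) : h' ≤ 0 := by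
  have h1 : Tendsto (slope h 0) (nhdsWithin 0 {0}ᶜ) (nhds h') :=
    hasDerivAt_iff_tendsto_slope.mp hd
  have h2 : Tendsto (slope h 0) (nhdsWithin 0 (Set.Ioi 0)) (nhds h') :=
    h1.mono_left (nhdsWithin_mono 0 (fun x hx => Set.mem_compl_singleton_iff.mpr hx.ne'))
  refine le_of_tendsto h2 ?_
  filter_upwards [Ioo_mem_nhdsGT_of_mem (by norm_num : (0:ℝ) ∈ Set.Ico 0 1),
    self_mem_nhdsWithin] with t ht ht'
  rw [slope_def_field]
  apply div_nonpos_of_nonpos_of_nonneg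
  · simpa using sub_nonpos.mpr (hle t ht)
  · simpa using le_of_lt ht'

private lemma keyIneq {X B : Type*} [Fintype X] [Fintype B] {α : ℝ} (hα : 1 < α)
    (b c : X → B → ℝ) (hb : ∀ x y, 0 ≤ b x y) (hc : ∀ x y, 0 ≤ c x y)
    (hmax : ∀ t ∈ Set.Ioo (0:ℝ) 1,
      ∑ x, (∑ y, ((1-t) * b x y + t * c x y) ^ α⁻¹) ^ α ≤ ∑ x, (∑ y, b x y ^ α⁻¹) ^ α) :
    ∑ x, ((∑ y, b x y ^ α⁻¹) ^ (α - 1) *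
        ∑ y, (if 0 < b x y then b x y ^ (α⁻¹ - 1) * c x y else 0))
      ≤ ∑ x, (∑ y, b x y ^ α⁻¹) ^ α := by
  classical
  have hα0 : (0:ℝ) < α := lt_trans one_pos hα
  have hαne : α ≠ 0 := ne_of_gt hα0
  have hq0 : (0:ℝ) < α⁻¹ := inv_pos.mpr hα0
  have hqne : (α:ℝ)⁻¹ ≠ 0 := ne_of_gt hq0
  set q : ℝ := α⁻¹ with hqdef
  set Y : X → Finset B := fun x => Finset.univ.filter (fun y => 0 < b x y) with hY
  set S : X → ℝ := fun x => ∑ y, b x y ^ q with hS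
  set T : X → ℝ := fun x => ∑ y ∈ Y x, b x y ^ (q - 1) * c x y with hT
  have hmemY : ∀ x y, y ∈ Y x ↔ 0 < b x y := by
    intro x y; rw [hY]; simp
  have hfilter : ∀ x, ∑ y ∈ Y x, b x y ^ q = S x := by
    intro x
    refine Finset.sum_filter_of_ne fun y _ hne => ?_
    rcases lt_or_eq_of_le (hb x y) with h | h
    · exact h
    · exact absurd (by rw [← h, Real.zero_rpow hqne]) hne
  have hSnn : ∀ x, 0 ≤ S x := fun x =>
    Finset.sum_nonneg fun y _ => Real.rpow_nonneg (hb x y) q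
  -- the restricted perturbation function
  set L : ℝ → ℝ := fun t => ∑ x, (∑ y ∈ Y x, ((1-t) * b x y + t * c x y) ^ q) ^ α with hL
  have hval : ∀ x y, (1 - (0:ℝ)) * b x y + 0 * c x y = b x y := fun x y => by ring
  have hL0 : L 0 = ∑ x, (S x) ^ α := by
    refine Finset.sum_congr rfl fun x _ => ?_
    rw [← hfilter x]
    congr 1
    exact Finset.sum_congr rfl fun y _ => by rw [hval]
  -- L t ≤ L 0 on Ioo 0 1
  have hLle : ∀ t ∈ Set.Ioo (0:ℝ) 1, L t ≤ L 0 := by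
    intro t ht
    rw [hL0]
    refine le_trans ?_ (hmax t ht)
    refine Finset.sum_le_sum fun x _ => ?_
    have hnn : ∀ y, 0 ≤ (1-t) * b x y + t * c x y := fun y => by
      have h1 : (0:ℝ) ≤ 1 - t := by linarith [ht.2]
      exact add_nonneg (mul_nonneg h1 (hb x y)) (mul_nonneg (le_of_lt ht.1) (hc x y))
    exact Real.rpow_le_rpow (Finset.sum_nonneg fun y _ => Real.rpow_nonneg (hnn y) q)
      (Finset.sum_le_sum_of_subset_of_nonneg (Finset.filter_subset _ _)
        (fun y _ _ => Real.rpow_nonneg (hnn y) q)) (le_of_lt hα0)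
  -- derivative of L at 0
  set D : X → ℝ := fun x =>
    (∑ y ∈ Y x, (c x y - b x y) * q * b x y ^ (q - 1)) * α * (S x) ^ (α - 1) with hD
  have hderiv : HasDerivAt L (∑ x, D x) 0 := by
    refine HasDerivAt.fun_sum fun x _ => ?_
    have hinner : HasDerivAt (fun t => ∑ y ∈ Y x, ((1-t) * b x y + t * c x y) ^ q)
        (∑ y ∈ Y x, (c x y - b x y) * q * b x y ^ (q - 1)) 0 := by
      refine HasDerivAt.fun_sum fun y hy => ?_
      have hby : 0 < b x y := (hmemY x y).mp hy
      have haff : HasDerivAt (fun t : ℝ => (1-t) * b x y + t * c x y) (c x y - b x y) 0 := by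
        have h1 : HasDerivAt (fun t : ℝ => (1-t) * b x y + t * c x y)
            ((0 - 1) * b x y + 1 * c x y) 0 :=
          (((hasDerivAt_const (0:ℝ) (1:ℝ)).sub (hasDerivAt_id 0)).mul_const (b x y)).add
            ((hasDerivAt_id 0).mul_const (c x y))
        convert h1 using 1; ring
      have := haff.rpow_const (p := q) (Or.inl (by rw [hval x y]; exact ne_of_gt hby))
      rw [hval x y] at this
      exact this
    have hSval : (∑ y ∈ Y x, ((1-(0:ℝ)) * b x y + 0 * c x y) ^ q) = S x := by
      rw [← hfilter x]
      exact Finset.sum_congr rfl fun y _ => by rw [hval]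
    by_cases hne : (Y x).Nonempty
    · have hS0 : 0 < S x := by
        rw [← hfilter x]
        exact Finset.sum_pos (fun y hy => Real.rpow_pos_of_pos ((hmemY x y).mp hy) q) hne
      have := hinner.rpow_const (p := α) (Or.inl (by rw [hSval]; exact ne_of_gt hS0))
      rw [hSval] at this
      exact this
    · rw [Finset.not_nonempty_iff_eq_empty] at hne
      have hfun : (fun t : ℝ => (∑ y ∈ Y x, ((1-t) * b x y + t * c x y) ^ q) ^ α)
          = fun _ => (0:ℝ) := by
        funext t
        rw [hne, Finset.sum_empty, Real.zero_rpow hαne]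
      have hDx : D x = 0 := by rw [hD]; simp [hne]
      rw [hDx, hfun]
      exact hasDerivAt_const 0 0
  have hD0 : ∑ x, D x ≤ 0 := deriv_nonpos_of_max hderiv hLle
  -- rewrite D x
  have hSS : ∀ x, (S x) ^ (α - 1) * S x = (S x) ^ α := by
    intro x
    rcases lt_or_eq_of_le (hSnn x) with h | h
    · rw [← Real.rpow_add_one (ne_of_gt h) (α - 1)]; norm_num
    · rw [← h, Real.zero_rpow hαne, mul_zero]
  have hDx : ∀ x, D x = (S x) ^ (α - 1) * T x - (S x) ^ α := by
    intro x
    have hsum : ∑ y ∈ Y x, (c x y - b x y) * q * b x y ^ (q - 1)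
        = q * T x - q * S x := by
      have h1 : ∀ y ∈ Y x, (c x y - b x y) * q * b x y ^ (q - 1)
          = q * (b x y ^ (q - 1) * c x y) - q * (b x y ^ q) := by
        intro y hy
        have hby : 0 < b x y := (hmemY x y).mp hy
        have hb1 : b x y ^ q = b x y ^ (q - 1) * b x y := by
          rw [← Real.rpow_add_one (ne_of_gt hby) (q - 1)]; norm_num
        rw [hb1]; ring
      rw [Finset.sum_congr rfl h1, Finset.sum_sub_distrib, ← Finset.mul_sum, ← Finset.mul_sum,
        hfilter x]
    simp only [hD]
    rw [hsum]
    have hqa : q * α = 1 := inv_mul_cancel₀ hαne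
    have : (q * T x - q * S x) * α * S x ^ (α - 1)
        = (q * α) * (S x ^ (α - 1) * T x - S x ^ (α - 1) * S x) := by ring
    rw [this, hqa, one_mul, hSS x]
  -- conclude
  have hTif : ∀ x, (∑ y, (if 0 < b x y then b x y ^ (q - 1) * c x y else 0)) = T x := by
    intro x
    rw [hT, hY]
    exact (Finset.sum_filter _ _).symm
  have hfinal : ∑ x, ((S x) ^ (α - 1) * T x - (S x) ^ α) ≤ 0 := by
    calc ∑ x, ((S x) ^ (α - 1) * T x - (S x) ^ α) = ∑ x, D x :=
          Finset.sum_congr rfl fun x _ => (hDx x).symm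
      _ ≤ 0 := hD0
  rw [Finset.sum_sub_distrib] at hfinal
  calc ∑ x, ((S x) ^ (α - 1) * ∑ y, (if 0 < b x y then b x y ^ (q - 1) * c x y else 0))
      = ∑ x, (S x) ^ (α - 1) * T x := Finset.sum_congr rfl fun x _ => by rw [hTif x]
    _ ≤ ∑ x, (S x) ^ α := by linarith

/-- For `α > 1`, if the prior `w*` attains
`C_α = sup_w I_α^w(θ,Y|X^n)` over prior probability measures, then the conditional `α`-NML
predictor `p̂*_α` associated with `w*` satisfies `R_α(p̂*_α,θ) ≤ C_α` for every `θ ∈ Θ`. -/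
theorem alphaNML_regret_le_sibson_capacity
    {𝒳 Θ : Type*} [Fintype 𝒳] [Nonempty 𝒳] [MeasurableSpace Θ]
    (ℓ n : ℕ) (hℓ : 0 < ℓ) (hn : 0 < n) (α : ℝ) (hα : 1 < α)
    (p : Θ → (Fin ℓ → 𝒳) → ℝ)
    (hp : ∀ θ, IsPMF (p θ))
    (hmeas : ∀ z : Fin ℓ → 𝒳, Measurable fun θ => p θ z)
    (wstar : Measure Θ) [IsProbabilityMeasure wstar]
    (hopt : ∀ w : Measure Θ, IsProbabilityMeasure w →
      sibsonMI α p n w ≤ sibsonMI α p n wstar) :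
    ∀ θ : Θ, alphaRegret α p n (alphaNML α p n wstar) θ ≤ sibsonMI α p n wstar := by
  classical
  intro θ0
  have hα0 : (0:ℝ) < α := lt_trans one_pos hα
  have hαne : α ≠ 0 := ne_of_gt hα0
  have hα1 : (0:ℝ) < α - 1 := by linarith
  have hα1ne : α - 1 ≠ 0 := ne_of_gt hα1
  have hq0 : (0:ℝ) < α⁻¹ := inv_pos.mpr hα0
  have hqne : (α:ℝ)⁻¹ ≠ 0 := ne_of_gt hq0
  have hp0 : ∀ θ z, 0 ≤ p θ z := fun θ => (hp θ).1
  have hp1 : ∀ θ z, p θ z ≤ 1 := fun θ z => by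
    calc p θ z ≤ ∑ y, p θ y := Finset.single_le_sum (fun y _ => hp0 θ y) (Finset.mem_univ z)
      _ = 1 := (hp θ).2
  have hprod0 : ∀ θ (x : Fin n → (Fin ℓ → 𝒳)), 0 ≤ prodP p n θ x := fun θ x =>
    Finset.prod_nonneg fun i _ => hp0 θ (x i)
  have hprod1 : ∀ θ x, prodP p n θ x ≤ 1 := fun θ x =>
    Finset.prod_le_one (fun i _ => hp0 θ (x i)) (fun i _ => hp1 θ (x i))
  set f : (Fin n → (Fin ℓ → 𝒳)) → (Fin ℓ → 𝒳) → Θ → ℝ :=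
    fun x y θ => prodP p n θ x * p θ y ^ α with hf
  have hfmeas : ∀ x y, Measurable (f x y) := fun x y =>
    (Finset.measurable_prod Finset.univ fun i _ => hmeas (x i)).mul
      ((Real.continuous_rpow_const (le_of_lt hα0)).measurable.comp (hmeas y))
  have hf0 : ∀ x y θ, 0 ≤ f x y θ := fun x y θ =>
    mul_nonneg (hprod0 θ x) (Real.rpow_nonneg (hp0 θ y) α)
  have hf1 : ∀ x y θ, f x y θ ≤ 1 := fun x y θ =>
    mul_le_one₀ (hprod1 θ x)
      (Real.rpow_nonneg (hp0 θ y) α)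
      (Real.rpow_le_one (hp0 θ y) (hp1 θ y) (le_of_lt hα0))
  have hfint : ∀ x y (μ : Measure Θ) [IsFiniteMeasure μ], Integrable (f x y) μ := by
    intro x y μ hμ
    exact (integrable_const 1).mono' (hfmeas x y).aestronglyMeasurable
      (ae_of_all _ fun θ => by
        rw [Real.norm_eq_abs, abs_of_nonneg (hf0 x y θ)]; exact hf1 x y θ)
  set b : (Fin n → (Fin ℓ → 𝒳)) → (Fin ℓ → 𝒳) → ℝ := fun x y => ∫ θ, f x y θ ∂wstar with hbdef
  set c : (Fin n → (Fin ℓ → 𝒳)) → (Fin ℓ → 𝒳) → ℝ := fun x y => f x y θ0 with hcdef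
  have hbnn : ∀ x y, 0 ≤ b x y := fun x y => integral_nonneg fun θ => hf0 x y θ
  have hcnn : ∀ x y, 0 ≤ c x y := fun x y => hf0 x y θ0
  set S : (Fin n → (Fin ℓ → 𝒳)) → ℝ := fun x => ∑ y, b x y ^ α⁻¹ with hSdef
  set F : ℝ := ∑ x, S x ^ α with hFdef
  have hSnn : ∀ x, 0 ≤ S x := fun x =>
    Finset.sum_nonneg fun y _ => Real.rpow_nonneg (hbnn x y) _
  have hsibF : sibsonMI α p n wstar = (α - 1)⁻¹ * Real.log F := rfl
  have hbpos : ∃ x y, 0 < b x y := by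
    by_contra hcon
    push_neg at hcon
    have hb0 : ∀ x y, b x y = 0 := fun x y => le_antisymm (hcon x y) (hbnn x y)
    have hgint : Integrable (fun θ => ∑ x, ∑ y, f x y θ) wstar :=
      integrable_finset_sum _ fun x _ => integrable_finset_sum _ fun y _ => hfint x y wstar
    have hgzero : ∫ θ, (∑ x, ∑ y, f x y θ) ∂wstar = 0 := by
      rw [integral_finset_sum _ fun x _ => integrable_finset_sum _ fun y _ => hfint x y wstar]
      refine Finset.sum_eq_zero fun x _ => ?_
      rw [integral_finset_sum _ fun y _ => hfint x y wstar]
      exact Finset.sum_eq_zero fun y _ => hb0 x y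
    have hgpos : ∀ θ, 0 < ∑ x, ∑ y, f x y θ := by
      intro θ
      obtain ⟨y1, hy1⟩ : ∃ y, 0 < p θ y := by
        by_contra hno
        push_neg at hno
        have h0 : ∑ y, p θ y = 0 :=
          Finset.sum_eq_zero fun y _ => le_antisymm (hno y) (hp0 θ y)
        rw [(hp θ).2] at h0
        norm_num at h0
      have hx1 : 0 < f (fun _ => y1) y1 θ :=
        mul_pos (Finset.prod_pos fun i _ => hy1) (Real.rpow_pos_of_pos hy1 α)
      calc (0:ℝ) < f (fun _ => y1) y1 θ := hx1
        _ ≤ ∑ y, f (fun _ => y1) y θ :=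
            Finset.single_le_sum (fun y _ => hf0 _ y θ) (Finset.mem_univ y1)
        _ ≤ ∑ x, ∑ y, f x y θ :=
            Finset.single_le_sum (fun x _ => Finset.sum_nonneg fun y _ => hf0 x y θ)
              (Finset.mem_univ (fun _ => y1))
    have hae := (integral_eq_zero_iff_of_nonneg
      (fun θ => Finset.sum_nonneg fun x _ => Finset.sum_nonneg fun y _ => hf0 x y θ)
      hgint).mp hgzero
    obtain ⟨θ1, hθ1⟩ := hae.exists
    exact (hgpos θ1).ne' hθ1
  obtain ⟨x0, y0, hx0y0⟩ := hbpos
  have hFpos : 0 < F := by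
    calc (0:ℝ) < (b x0 y0 ^ α⁻¹) ^ α :=
          Real.rpow_pos_of_pos (Real.rpow_pos_of_pos hx0y0 _) _
      _ ≤ S x0 ^ α :=
          Real.rpow_le_rpow (Real.rpow_nonneg (hbnn x0 y0) _)
            (Finset.single_le_sum (fun y _ => Real.rpow_nonneg (hbnn x0 y) _)
              (Finset.mem_univ y0)) (le_of_lt hα0)
      _ ≤ F := Finset.single_le_sum (fun x _ => Real.rpow_nonneg (hSnn x) α)
          (Finset.mem_univ x0)
  have hsumprod : ∀ θ, ∑ x : Fin n → (Fin ℓ → 𝒳), prodP p n θ x = 1 := by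
    intro θ
    have hps := Finset.prod_univ_sum (fun _ : Fin n => (Finset.univ : Finset (Fin ℓ → 𝒳)))
      (fun _ y => p θ y)
    rw [Fintype.piFinset_univ] at hps
    have h2 : ∑ x : Fin n → (Fin ℓ → 𝒳), prodP p n θ x
        = ∑ x : Fin n → (Fin ℓ → 𝒳), ∏ i, p θ (x i) := rfl
    rw [h2, ← hps, (hp θ).2, Finset.prod_const_one]
  have hsib0 : (0:ℝ) ≤ sibsonMI α p n wstar := by
    have hdirac : sibsonMI α p n (Measure.dirac θ0) = 0 := by
      have h1 : sibsonMI α p n (Measure.dirac θ0)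
          = (α-1)⁻¹ * Real.log (∑ x, (∑ y, (∫ θ, f x y θ ∂(Measure.dirac θ0)) ^ α⁻¹) ^ α) := rfl
      rw [h1]
      have h2 : ∀ x : Fin n → (Fin ℓ → 𝒳),
          (∑ y, (∫ θ, f x y θ ∂(Measure.dirac θ0)) ^ α⁻¹) ^ α = prodP p n θ0 x := by
        intro x
        have h3 : ∀ y, (∫ θ, f x y θ ∂(Measure.dirac θ0)) ^ α⁻¹
            = prodP p n θ0 x ^ α⁻¹ * p θ0 y := by
          intro y
          rw [integral_dirac' _ _ (hfmeas x y).stronglyMeasurable]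
          show (prodP p n θ0 x * p θ0 y ^ α) ^ α⁻¹ = _
          rw [Real.mul_rpow (hprod0 θ0 x) (Real.rpow_nonneg (hp0 θ0 y) α),
            ← Real.rpow_mul (hp0 θ0 y), mul_inv_cancel₀ hαne, Real.rpow_one]
        rw [Finset.sum_congr rfl fun y _ => h3 y, ← Finset.mul_sum, (hp θ0).2, mul_one,
          ← Real.rpow_mul (hprod0 θ0 x), inv_mul_cancel₀ hαne, Real.rpow_one]
      rw [Finset.sum_congr rfl fun x _ => h2 x, hsumprod θ0, Real.log_one, mul_zero]
    calc (0:ℝ) = sibsonMI α p n (Measure.dirac θ0) := hdirac.symm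
      _ ≤ sibsonMI α p n wstar := hopt _ inferInstance
  have hmax : ∀ t ∈ Set.Ioo (0:ℝ) 1,
      ∑ x, (∑ y, ((1-t) * b x y + t * c x y) ^ α⁻¹) ^ α ≤ F := by
    intro t ht
    set wt : Measure Θ := ENNReal.ofReal (1 - t) • wstar + ENNReal.ofReal t • Measure.dirac θ0
      with hwt
    have h1t : (0:ℝ) ≤ 1 - t := by linarith [ht.2]
    have hprob : IsProbabilityMeasure wt := by
      constructor
      rw [hwt, Measure.add_apply, Measure.smul_apply, Measure.smul_apply, measure_univ,
        measure_univ, smul_eq_mul, smul_eq_mul, mul_one, mul_one,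
        ← ENNReal.ofReal_add h1t (le_of_lt ht.1)]
      norm_num
    have hint : ∀ x y, ∫ θ, f x y θ ∂wt = (1 - t) * b x y + t * c x y := by
      intro x y
      rw [hwt, integral_add_measure ((hfint x y wstar).smul_measure ENNReal.ofReal_ne_top)
        ((hfint x y (Measure.dirac θ0)).smul_measure ENNReal.ofReal_ne_top),
        integral_smul_measure, integral_smul_measure,
        integral_dirac' _ _ (hfmeas x y).stronglyMeasurable,
        ENNReal.toReal_ofReal h1t, ENNReal.toReal_ofReal (le_of_lt ht.1)]
      rfl
    have hsibt : sibsonMI α p n wt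
        = (α-1)⁻¹ * Real.log (∑ x, (∑ y, ((1-t) * b x y + t * c x y) ^ α⁻¹) ^ α) := by
      have h1 : sibsonMI α p n wt
          = (α-1)⁻¹ * Real.log (∑ x, (∑ y, (∫ θ, f x y θ ∂wt) ^ α⁻¹) ^ α) := rfl
      rw [h1]
      congr 2
      refine Finset.sum_congr rfl fun x _ => ?_
      congr 1
      exact Finset.sum_congr rfl fun y _ => by rw [hint x y]
    have hle := hopt wt hprob
    rw [hsibt, hsibF] at hle
    have hlog := (mul_le_mul_iff_right₀ (inv_pos.mpr hα1)).mp hle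
    have hnn : ∀ x y, 0 ≤ (1-t) * b x y + t * c x y := fun x y =>
      add_nonneg (mul_nonneg h1t (hbnn x y)) (mul_nonneg (le_of_lt ht.1) (hcnn x y))
    have hAtpos : 0 < ∑ x, (∑ y, ((1-t) * b x y + t * c x y) ^ α⁻¹) ^ α := by
      have hpos0 : 0 < (1-t) * b x0 y0 + t * c x0 y0 :=
        lt_of_lt_of_le (mul_pos (by linarith [ht.2]) hx0y0)
          (le_add_of_nonneg_right (mul_nonneg (le_of_lt ht.1) (hcnn x0 y0)))
      calc (0:ℝ) < (((1-t) * b x0 y0 + t * c x0 y0) ^ α⁻¹) ^ α :=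
            Real.rpow_pos_of_pos (Real.rpow_pos_of_pos hpos0 _) _
        _ ≤ (∑ y, ((1-t) * b x0 y + t * c x0 y) ^ α⁻¹) ^ α :=
            Real.rpow_le_rpow (Real.rpow_nonneg (hnn x0 y0) _)
              (Finset.single_le_sum (fun y _ => Real.rpow_nonneg (hnn x0 y) _)
                (Finset.mem_univ y0)) (le_of_lt hα0)
        _ ≤ _ := Finset.single_le_sum
            (fun x _ => Real.rpow_nonneg (Finset.sum_nonneg fun y _ =>
              Real.rpow_nonneg (hnn x y) _) α) (Finset.mem_univ x0)
    exact (Real.log_le_log_iff hAtpos hFpos).mp hlog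
  have hmax' : ∀ t ∈ Set.Ioo (0:ℝ) 1,
      ∑ x, (∑ y, ((1-t) * b x y + t * c x y) ^ α⁻¹) ^ α
        ≤ ∑ x, (∑ y, b x y ^ α⁻¹) ^ α := by
    intro t ht
    simpa only [hFdef, hSdef] using hmax t ht
  -- integrability of prodP and b ≤ m
  have hPmeas : ∀ x : Fin n → (Fin ℓ → 𝒳), Measurable (fun θ => prodP p n θ x) := fun x =>
    Finset.measurable_prod Finset.univ fun i _ => hmeas (x i)
  have hPint : ∀ x, Integrable (fun θ => prodP p n θ x) wstar := fun x =>
    (integrable_const 1).mono' (hPmeas x).aestronglyMeasurable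
      (ae_of_all _ fun θ => by
        rw [Real.norm_eq_abs, abs_of_nonneg (hprod0 θ x)]; exact hprod1 θ x)
  have hble : ∀ x y, b x y ≤ ∫ θ, prodP p n θ x ∂wstar := by
    intro x y
    refine integral_mono (hfint x y wstar) (hPint x) fun θ => ?_
    exact mul_le_of_le_one_right (hprod0 θ x)
      (Real.rpow_le_one (hp0 θ y) (hp1 θ y) (le_of_lt hα0))
  have hdiv : ∀ (A M T : ℝ), M ≠ 0 → T ≠ 0 → A / M / (T / M) = A / T := by
    intro A M T hM hT
    field_simp
  have hSpos : ∀ x y, 0 < b x y → 0 < S x := fun x y hb =>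
    lt_of_lt_of_le (Real.rpow_pos_of_pos hb α⁻¹)
      (Finset.single_le_sum (fun y' _ => Real.rpow_nonneg (hbnn x y') _) (Finset.mem_univ y))
  have hphat : ∀ x y, 0 < b x y → alphaNML α p n wstar x y = b x y ^ α⁻¹ / S x := by
    intro x y hb
    have hm : 0 < ∫ θ, prodP p n θ x ∂wstar := lt_of_lt_of_le hb (hble x y)
    have hmq : 0 < (∫ θ, prodP p n θ x ∂wstar) ^ α⁻¹ := Real.rpow_pos_of_pos hm _
    have hS : 0 < S x := hSpos x y hb
    have h1 : alphaNML α p n wstar x y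
        = (b x y / ∫ θ, prodP p n θ x ∂wstar) ^ α⁻¹ /
          ∑ y', (b x y' / ∫ θ, prodP p n θ x ∂wstar) ^ α⁻¹ := rfl
    have h2 : ∀ y', (b x y' / ∫ θ, prodP p n θ x ∂wstar) ^ α⁻¹
        = b x y' ^ α⁻¹ / (∫ θ, prodP p n θ x ∂wstar) ^ α⁻¹ := fun y' =>
      Real.div_rpow (hbnn x y') (le_of_lt hm) _
    rw [h1, h2 y, Finset.sum_congr rfl fun y' _ => h2 y', ← Finset.sum_div]
    exact hdiv _ _ _ (ne_of_gt hmq) (ne_of_gt hS)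
  have hphat0 : ∀ x y, ¬ 0 < b x y → alphaNML α p n wstar x y = 0 := by
    intro x y hb
    have hb0 : b x y = 0 := le_antisymm (not_lt.mp hb) (hbnn x y)
    have h1 : alphaNML α p n wstar x y
        = (b x y / ∫ θ, prodP p n θ x ∂wstar) ^ α⁻¹ /
          ∑ y', (b x y' / ∫ θ, prodP p n θ x ∂wstar) ^ α⁻¹ := rfl
    rw [h1, hb0, zero_div, Real.zero_rpow hqne, zero_div]
  -- the termwise identity
  have hterm : ∀ x y,
      prodP p n θ0 x * (p θ0 y * (p θ0 y / alphaNML α p n wstar x y) ^ (α-1))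
        = S x ^ (α-1) * (if 0 < b x y then b x y ^ (α⁻¹ - 1) * c x y else 0) := by
    intro x y
    by_cases hb : 0 < b x y
    · rw [if_pos hb, hphat x y hb]
      have hS : 0 < S x := hSpos x y hb
      rcases eq_or_lt_of_le (hp0 θ0 y) with hpy | hpy
      · have hc0 : c x y = 0 := by
          show prodP p n θ0 x * p θ0 y ^ α = 0
          rw [← hpy, Real.zero_rpow hαne, mul_zero]
        rw [hc0, ← hpy]
        simp
      · have hB : (0:ℝ) ≤ b x y := hbnn x y
        have hu : p θ0 y ^ α = p θ0 y * p θ0 y ^ (α-1) := by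
          nth_rewrite 1 [show α = 1 + (α-1) by ring]
          rw [Real.rpow_add hpy, Real.rpow_one]
        have hBneg : b x y ^ (α⁻¹ - 1) = (b x y ^ (1 - α⁻¹))⁻¹ := by
          rw [show (α⁻¹ - 1 : ℝ) = -(1 - α⁻¹) by ring, Real.rpow_neg hB]
        have hcval : c x y = prodP p n θ0 x * p θ0 y ^ α := rfl
        rw [div_div_eq_mul_div,
          Real.div_rpow (mul_nonneg (le_of_lt hpy) (le_of_lt hS)) (Real.rpow_nonneg hB _),
          Real.mul_rpow (le_of_lt hpy) (le_of_lt hS), ← Real.rpow_mul hB,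
          show α⁻¹ * (α - 1) = 1 - α⁻¹ by rw [mul_sub, inv_mul_cancel₀ hαne, mul_one],
          hcval, hu, hBneg, div_eq_mul_inv]
        ring
    · rw [if_neg hb, hphat0 x y hb, div_zero, Real.zero_rpow hα1ne, mul_zero, mul_zero,
        mul_zero]
  have hrow : ∀ x,
      prodP p n θ0 x * ∑ y, p θ0 y * (p θ0 y / alphaNML α p n wstar x y) ^ (α-1)
        = S x ^ (α-1) * ∑ y, (if 0 < b x y then b x y ^ (α⁻¹ - 1) * c x y else 0) := by
    intro x
    rw [Finset.mul_sum, Finset.mul_sum]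
    exact Finset.sum_congr rfl fun y _ => hterm x y
  set K : ℝ := ∑ x, S x ^ (α-1) * ∑ y, (if 0 < b x y then b x y ^ (α⁻¹ - 1) * c x y else 0)
    with hKdef
  have hKnn : (0:ℝ) ≤ K := Finset.sum_nonneg fun x _ =>
    mul_nonneg (Real.rpow_nonneg (hSnn x) _)
      (Finset.sum_nonneg fun y _ => by
        by_cases hb : 0 < b x y
        · rw [if_pos hb]
          exact mul_nonneg (Real.rpow_nonneg (hbnn x y) _) (hcnn x y)
        · rw [if_neg hb])
  have hKF : K ≤ F := by
    rw [hKdef, hFdef]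
    have := keyIneq hα b c hbnn hcnn hmax'
    simpa only [hSdef] using this
  have hregK : alphaRegret α p n (alphaNML α p n wstar) θ0 = (α-1)⁻¹ * Real.log K := by
    have h1 : alphaRegret α p n (alphaNML α p n wstar) θ0
        = (α-1)⁻¹ * Real.log (∑ x, prodP p n θ0 x *
            ∑ y, p θ0 y * (p θ0 y / alphaNML α p n wstar x y) ^ (α-1)) := rfl
    rw [h1, hKdef]
    congr 2
    exact Finset.sum_congr rfl fun x _ => hrow x
  rcases eq_or_lt_of_le hKnn with hK0 | hKpos
  · rw [hregK, ← hK0, Real.log_zero, mul_zero]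
    exact hsib0
  · rw [hregK, hsibF]
    exact mul_le_mul_of_nonneg_left ((Real.log_le_log_iff hKpos hFpos).mpr hKF)
      (le_of_lt (inv_pos.mpr hα1))
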